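/- arXiv:1802.09117 — 3 statements merged into one kernel-verified Lean document; each statement's English description precedes it below -/
import Mathlib

section
/- Let c ∈ (0, 1/2) be a constant and suppose the sequence (m, n, p) satisfies 1 ≤ m ≤ p^c and m·(log p)/n ≤ 1/4 as p → ∞. Then for any a ∈ (0, (1−2c)/4), the sum over k = 0,…,m of [1 − k·a·(log p)/n]^{−n} · C(m,k)·C(p−m−1, m−k)/C(p−1, m) is at most 1 + o(1) as p → ∞. -/
open Filter

lemma auxA (N M : ℕ) (hMN : M ≤ N) : ∀ k ≤ M, Nat.choose N (M - k) * (N - M + 1) ^ k ≤ Nat.choose N M * M ^ k := by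
  intro k
  induction k with
  | zero => simp
  | succ k ih =>
    intro hk
    have hk' : k < M := by omega
    have hj : M - (k + 1) + 1 = M - k := by omega
    have hid : Nat.choose N (M - (k+1) + 1) * (M - (k+1) + 1)
        = Nat.choose N (M - (k+1)) * (N - (M - (k+1))) := Nat.choose_succ_right_eq _ _
    have h1 : Nat.choose N (M - (k+1)) * (N - M + 1) ≤ Nat.choose N (M - k) * M := by
      calc Nat.choose N (M - (k+1)) * (N - M + 1)
          ≤ Nat.choose N (M - (k+1)) * (N - (M - (k+1))) :=
            Nat.mul_le_mul le_rfl (by omega)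
        _ = Nat.choose N (M - (k+1) + 1) * (M - (k+1) + 1) := hid.symm
        _ ≤ Nat.choose N (M - k) * M := by rw [hj]; exact Nat.mul_le_mul le_rfl (by omega)
    calc Nat.choose N (M - (k+1)) * (N - M + 1) ^ (k+1)
        = (Nat.choose N (M - (k+1)) * (N - M + 1)) * (N - M + 1) ^ k := by ring
      _ ≤ (Nat.choose N (M - k) * M) * (N - M + 1) ^ k := Nat.mul_le_mul_right _ h1
      _ = (Nat.choose N (M - k) * (N - M + 1) ^ k) * M := by ring
      _ ≤ (Nat.choose N M * M ^ k) * M := Nat.mul_le_mul_right _ (ih (le_of_lt hk'))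
      _ = Nat.choose N M * M ^ (k+1) := by ring

set_option maxHeartbeats 2000000 in
lemma auxMain (c a : ℝ) (ha0 : 0 < a) (ha14 : a ≤ 1/4) (hc0 : 0 < c)
    (M n P : ℕ)
    (hM1 : 1 ≤ M)
    (hMc : (M:ℝ) ≤ (P:ℝ) ^ c)
    (hMn : (M:ℝ) * Real.log P / n ≤ 1/4)
    (hP1 : 1 ≤ P)
    (h4 : 4 * (P:ℝ) ^ c ≤ P)
    (hr : (P:ℝ) ^ (2*a+2*c-1) ≤ 1/4) :
    ∑ k ∈ Finset.range (M+1), ((1 - (k:ℝ)*a*Real.log P/n)^n)⁻¹ *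
      ((Nat.choose M k : ℝ) * (Nat.choose (P - M - 1) (M - k)) / (Nat.choose (P-1) M))
    ≤ 1 + 4 * (P:ℝ)^(2*a+2*c-1) := by
  set L := Real.log P with hLdef
  set r := (P:ℝ)^(2*a+2*c-1) with hrdef
  have hPpos : (0:ℝ) < P := by exact_mod_cast hP1
  have hP1R : (1:ℝ) ≤ P := by exact_mod_cast hP1
  have hL0 : 0 ≤ L := Real.log_nonneg hP1R
  have hr0 : 0 ≤ r := Real.rpow_nonneg (le_of_lt hPpos) _
  have hm4R : 4 * (M:ℝ) ≤ P := le_trans (by nlinarith) h4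
  have hm4 : 4 * M ≤ P := by exact_mod_cast hm4R
  set N := P - M - 1 with hNdef
  have hMN : M ≤ N := by omega
  have hNm : N - M + 1 = P - 2*M := by omega
  have hCNpos : 0 < Nat.choose N M := Nat.choose_pos hMN
  have hCDpos : 0 < Nat.choose (P-1) M := Nat.choose_pos (by omega)
  have hCNposR : (0:ℝ) < Nat.choose N M := by exact_mod_cast hCNpos
  have hCDposR : (0:ℝ) < Nat.choose (P-1) M := by exact_mod_cast hCDpos
  have hNleD : (Nat.choose N M : ℝ) ≤ Nat.choose (P-1) M := by
    exact_mod_cast Nat.choose_le_choose M (show N ≤ P - 1 by omega)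
  have hp2m : ((P - 2*M : ℕ):ℝ) = (P:ℝ) - 2*M := by
    push_cast [Nat.cast_sub (show 2*M ≤ P by omega)]; ring
  have hM1R : (1:ℝ) ≤ (M:ℝ) := by exact_mod_cast hM1
  have hp2mpos : (0:ℝ) < (P:ℝ) - 2*M := by nlinarith
  have hhalf : (P:ℝ)/2 ≤ (P:ℝ) - 2*M := by nlinarith
  have hm2 : (M:ℝ)^2 ≤ (P:ℝ)^(2*c) := by
    have h1 : (P:ℝ)^(2*c) = (P:ℝ)^c * (P:ℝ)^c := by
      rw [show 2*c = c + c by ring, Real.rpow_add hPpos]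
    have h0 : (0:ℝ) ≤ (M:ℝ) := Nat.cast_nonneg M
    nlinarith
  have hPcpos : (0:ℝ) < (P:ℝ)^(2*c) := Real.rpow_pos_of_pos hPpos _
  have hbase : (M:ℝ)^2 / ((P:ℝ) - 2*M) ≤ 2 * (P:ℝ)^(2*c-1) := by
    have h2 : (P:ℝ)^(2*c-1) = (P:ℝ)^(2*c) / P := by
      rw [show 2*c-1 = 2*c + (-1) by ring, Real.rpow_add hPpos, Real.rpow_neg_one]
      ring
    have h3 : (M:ℝ)^2 / ((P:ℝ) - 2*M) ≤ (P:ℝ)^(2*c) / ((P:ℝ)/2) := by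
      apply div_le_div₀ hPcpos.le hm2 (by linarith) hhalf
    calc (M:ℝ)^2 / ((P:ℝ) - 2*M) ≤ (P:ℝ)^(2*c) / ((P:ℝ)/2) := h3
      _ = 2 * ((P:ℝ)^(2*c) / P) := by field_simp
      _ = 2 * (P:ℝ)^(2*c-1) := by rw [h2]
  -- T bound
  have hT : ∀ k ≤ M, ((1 - (k:ℝ)*a*L/n)^n)⁻¹ ≤ ((P:ℝ)^(2*a))^k := by
    intro k hk
    have hPa1 : (1:ℝ) ≤ (P:ℝ)^(2*a) := by
      calc (1:ℝ) = (P:ℝ)^(0:ℝ) := (Real.rpow_zero _).symm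
        _ ≤ (P:ℝ)^(2*a) := Real.rpow_le_rpow_of_exponent_le hP1R (by linarith)
    rcases Nat.eq_zero_or_pos n with hn | hn
    · subst hn
      simp only [Nat.cast_zero, div_zero, pow_zero, inv_one]
      exact one_le_pow₀ hPa1
    · have hnR : (0:ℝ) < n := by exact_mod_cast hn
      have hnne : (n:ℝ) ≠ 0 := ne_of_gt hnR
      set x := (k:ℝ)*a*L/n with hxdef
      have hk0 : (0:ℝ) ≤ (k:ℝ) := Nat.cast_nonneg k
      have hx0 : 0 ≤ x := by
        apply div_nonneg _ hnR.le
        exact mul_nonneg (mul_nonneg hk0 ha0.le) hL0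
      have hkM : (k:ℝ) ≤ M := by exact_mod_cast hk
      have hx : x ≤ 1/2 := by
        have h1 : x ≤ (M:ℝ)*a*L/n := by
          rw [hxdef]; gcongr
        have h2 : (M:ℝ)*a*L/n = a * ((M:ℝ)*L/n) := by ring
        nlinarith [mul_le_mul_of_nonneg_left hMn ha0.le]
      have h1x : (0:ℝ) < 1 - x := by linarith
      have hinv : (1 - x)⁻¹ ≤ Real.exp (2*x) := by
        rw [inv_eq_one_div, div_le_iff₀ h1x]
        nlinarith [Real.add_one_le_exp (2*x)]
      have hmono : ((1-x)^n)⁻¹ ≤ (Real.exp (2*x))^n := by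
        rw [← inv_pow]
        exact pow_le_pow_left₀ (inv_nonneg.mpr h1x.le) hinv n
      have hxn : (n:ℝ) * (2*x) = 2*(k:ℝ)*a*L := by
        rw [hxdef]; field_simp
      have hexp : (Real.exp (2*x))^n = Real.exp (2*(k:ℝ)*a*L) := by
        rw [← Real.exp_nat_mul, hxn]
      have hfin : Real.exp (2*(k:ℝ)*a*L) = ((P:ℝ)^(2*a))^k := by
        rw [Real.rpow_def_of_pos hPpos, ← Real.exp_nat_mul]
        congr 1
        rw [hLdef]; ring
      calc ((1-x)^n)⁻¹ ≤ (Real.exp (2*x))^n := hmono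
        _ = Real.exp (2*(k:ℝ)*a*L) := hexp
        _ = ((P:ℝ)^(2*a))^k := hfin
  -- W bound
  have hW : ∀ k ≤ M, ((Nat.choose M k : ℝ) * (Nat.choose N (M - k)) / (Nat.choose (P-1) M))
      ≤ ((M:ℝ)^2/((P:ℝ)-2*M))^k := by
    intro k hk
    have hB : (Nat.choose N (M-k) : ℝ) * ((P:ℝ)-2*M)^k ≤ (Nat.choose N M : ℝ) * (M:ℝ)^k := by
      have h := auxA N M hMN k hk
      rw [hNm] at h
      have h2 := (Nat.cast_le (α := ℝ)).mpr h
      push_cast at h2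
      rwa [hp2m] at h2
    have hA : (Nat.choose M k : ℝ) ≤ (M:ℝ)^k := by exact_mod_cast Nat.choose_le_pow M k
    have hBE : (Nat.choose N (M-k) : ℝ) / (Nat.choose N M : ℝ) ≤ (M:ℝ)^k / ((P:ℝ)-2*M)^k := by
      rw [div_le_div_iff₀ hCNposR (by positivity)]
      linarith [hB]
    calc (Nat.choose M k : ℝ) * (Nat.choose N (M - k)) / (Nat.choose (P-1) M)
        ≤ (Nat.choose M k : ℝ) * (Nat.choose N (M - k)) / (Nat.choose N M) := by
          apply div_le_div_of_nonneg_left (by positivity) hCNposR hNleD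
      _ = (Nat.choose M k : ℝ) * ((Nat.choose N (M - k)) / (Nat.choose N M)) := by ring
      _ ≤ (M:ℝ)^k * ((M:ℝ)^k / ((P:ℝ)-2*M)^k) := by
          apply mul_le_mul hA hBE (by positivity) (by positivity)
      _ = ((M:ℝ)^2/((P:ℝ)-2*M))^k := by
          rw [div_pow, sq, mul_pow]
          ring
  -- combine
  have hterm : ∀ j, j < M → ((1 - ((j+1:ℕ):ℝ)*a*L/n)^n)⁻¹ *
      ((Nat.choose M (j+1) : ℝ) * (Nat.choose N (M - (j+1))) / (Nat.choose (P-1) M))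
      ≤ (2*r) * (1/2)^j := by
    intro j hj
    have hk : j+1 ≤ M := hj
    have hPa0 : (0:ℝ) ≤ (P:ℝ)^(2*a) := Real.rpow_nonneg hPpos.le _
    have h2r : (P:ℝ)^(2*a) * ((M:ℝ)^2/((P:ℝ)-2*M)) ≤ 2*r := by
      have he : r = (P:ℝ)^(2*a) * (P:ℝ)^(2*c-1) := by
        rw [hrdef, show 2*a+2*c-1 = 2*a + (2*c-1) by ring, Real.rpow_add hPpos]
      calc (P:ℝ)^(2*a) * ((M:ℝ)^2/((P:ℝ)-2*M)) ≤ (P:ℝ)^(2*a) * (2 * (P:ℝ)^(2*c-1)) :=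
            mul_le_mul_of_nonneg_left hbase hPa0
        _ = 2*r := by rw [he]; ring
    have hprod : ((1 - ((j+1:ℕ):ℝ)*a*L/n)^n)⁻¹ *
        ((Nat.choose M (j+1) : ℝ) * (Nat.choose N (M - (j+1))) / (Nat.choose (P-1) M))
        ≤ (((P:ℝ)^(2*a)) * ((M:ℝ)^2/((P:ℝ)-2*M)))^(j+1) := by
      rw [mul_pow]
      apply mul_le_mul (hT (j+1) hk) (hW (j+1) hk) (by positivity) (by positivity)
    have h2r1 : 2*r ≤ 1/2 := by linarith
    have hp0 : (0:ℝ) ≤ (P:ℝ)^(2*a) * ((M:ℝ)^2/((P:ℝ)-2*M)) := by positivity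
    calc ((1 - ((j+1:ℕ):ℝ)*a*L/n)^n)⁻¹ *
        ((Nat.choose M (j+1) : ℝ) * (Nat.choose N (M - (j+1))) / (Nat.choose (P-1) M))
        ≤ (((P:ℝ)^(2*a)) * ((M:ℝ)^2/((P:ℝ)-2*M)))^(j+1) := hprod
      _ ≤ (2*r)^(j+1) := pow_le_pow_left₀ hp0 h2r (j+1)
      _ = (2*r) * (2*r)^j := by ring
      _ ≤ (2*r) * (1/2)^j := by
          apply mul_le_mul_of_nonneg_left (pow_le_pow_left₀ (by linarith) h2r1 j) (by linarith)
  rw [Finset.sum_range_succ']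
  have hsum : ∑ j ∈ Finset.range M, ((1 - ((j+1:ℕ):ℝ)*a*L/n)^n)⁻¹ *
      ((Nat.choose M (j+1) : ℝ) * (Nat.choose N (M - (j+1))) / (Nat.choose (P-1) M))
      ≤ 4 * r := by
    calc ∑ j ∈ Finset.range M, ((1 - ((j+1:ℕ):ℝ)*a*L/n)^n)⁻¹ *
        ((Nat.choose M (j+1) : ℝ) * (Nat.choose N (M - (j+1))) / (Nat.choose (P-1) M))
        ≤ ∑ j ∈ Finset.range M, (2*r) * (1/2)^j :=
          Finset.sum_le_sum (fun j hj => hterm j (Finset.mem_range.mp hj))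
      _ = (2*r) * ∑ j ∈ Finset.range M, (1/2:ℝ)^j := by rw [Finset.mul_sum]
      _ ≤ (2*r) * 2 := mul_le_mul_of_nonneg_left (sum_geometric_two_le M) (by linarith)
      _ = 4 * r := by ring
  have hzero : ((1 - ((0:ℕ):ℝ)*a*L/n)^n)⁻¹ *
      ((Nat.choose M 0 : ℝ) * (Nat.choose N (M - 0)) / (Nat.choose (P-1) M)) ≤ 1 := by
    simp only [Nat.cast_zero, zero_mul, zero_div, sub_zero, one_pow, inv_one,
      Nat.choose_zero_right, Nat.cast_one, one_mul, Nat.sub_zero]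
    rw [div_le_one hCDposR]
    exact hNleD
  linarith


/-- the hypergeometric-weighted sum
`∑_{k=0}^{m} [1 − k a (log p)/n]^{−n} C(m,k)C(p−m−1,m−k)/C(p−1,m)`
is at most `1 + o(1)` as `p → ∞`, i.e. its limsup is at most 1. -/
theorem stmt2 (c a : ℝ) (hc0 : 0 < c) (hc1 : c < 1/2)
    (ha0 : 0 < a) (ha1 : a < (1 - 2*c)/4)
    (m n p : ℕ → ℕ)
    (hp : Tendsto (fun i => p i) atTop atTop)
    (hm1 : ∀ i, 1 ≤ m i)
    (hmc : ∀ i, (m i : ℝ) ≤ (p i : ℝ) ^ c)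
    (hmn : ∀ i, (m i : ℝ) * Real.log (p i) / (n i) ≤ 1/4) :
    Filter.limsup (fun i =>
        ∑ k ∈ Finset.range (m i + 1),
          ((1 - (k : ℝ) * a * Real.log (p i) / (n i)) ^ (n i))⁻¹ *
            ((Nat.choose (m i) k : ℝ) * (Nat.choose (p i - m i - 1) (m i - k)) /
              (Nat.choose (p i - 1) (m i)))) atTop ≤ 1 := by
  
  have hc12 : 2*c < 1 := by linarith
  have ha14 : a ≤ 1/4 := by linarith
  have heps : 0 < 1 - 2*c - 2*a := by linarith
  have hneg : 2*a+2*c-1 = -(1-2*c-2*a) := by ring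
  have hpR : Tendsto (fun i => (p i : ℝ)) atTop atTop :=
    tendsto_natCast_atTop_atTop.comp hp
  have h0 : Tendsto (fun i => (p i:ℝ)^(2*a+2*c-1)) atTop (nhds 0) := by
    have h := (tendsto_rpow_neg_atTop heps).comp hpR
    exact h.congr (fun i => by simp only [Function.comp_apply, ← hneg])
  have hg : Tendsto (fun i => 1 + 4*(p i:ℝ)^(2*a+2*c-1)) atTop (nhds 1) := by
    have h := tendsto_const_nhds (x := (1:ℝ)) (f := atTop (α := ℕ)) |>.add (h0.const_mul 4)
    simpa using h
  have hev1 : ∀ᶠ i in atTop, 1 ≤ p i := hp.eventually_ge_atTop 1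
  have hev2 : ∀ᶠ i in atTop, (4:ℝ) ≤ (p i:ℝ)^(1-c) :=
    ((tendsto_rpow_atTop (by linarith : (0:ℝ) < 1-c)).comp hpR).eventually_ge_atTop 4
  have hev3 : ∀ᶠ i in atTop, (p i:ℝ)^(2*a+2*c-1) ≤ 1/4 :=
    h0.eventually_le_const (by norm_num : (0:ℝ) < 1/4)
  have hFg : ∀ᶠ i in atTop, (∑ k ∈ Finset.range (m i + 1),
          ((1 - (k : ℝ) * a * Real.log (p i) / (n i)) ^ (n i))⁻¹ *
            ((Nat.choose (m i) k : ℝ) * (Nat.choose (p i - m i - 1) (m i - k)) /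
              (Nat.choose (p i - 1) (m i))))
      ≤ 1 + 4*(p i:ℝ)^(2*a+2*c-1) := by
    filter_upwards [hev1, hev2, hev3] with i h1 h2 h3
    have hppos : (0:ℝ) < p i := by exact_mod_cast h1
    have h4 : 4 * (p i:ℝ)^c ≤ p i := by
      have hpc : (0:ℝ) ≤ (p i:ℝ)^c := Real.rpow_nonneg hppos.le _
      calc 4 * (p i:ℝ)^c ≤ (p i:ℝ)^(1-c) * (p i:ℝ)^c :=
            mul_le_mul_of_nonneg_right h2 hpc
        _ = (p i:ℝ) := by
            rw [← Real.rpow_add hppos]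
            norm_num
    exact auxMain c a ha0 ha14 hc0 (m i) (n i) (p i) (hm1 i) (hmc i) (hmn i) h1 h4 h3
  have hub : ∀ᶠ i in atTop, (∑ k ∈ Finset.range (m i + 1),
          ((1 - (k : ℝ) * a * Real.log (p i) / (n i)) ^ (n i))⁻¹ *
            ((Nat.choose (m i) k : ℝ) * (Nat.choose (p i - m i - 1) (m i - k)) /
              (Nat.choose (p i - 1) (m i)))) ≤ 2 := by
    filter_upwards [hFg, hev3] with i hf h3
    linarith
  have hlb : ∀ᶠ i in atTop, (0:ℝ) ≤ (∑ k ∈ Finset.range (m i + 1),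
          ((1 - (k : ℝ) * a * Real.log (p i) / (n i)) ^ (n i))⁻¹ *
            ((Nat.choose (m i) k : ℝ) * (Nat.choose (p i - m i - 1) (m i - k)) /
              (Nat.choose (p i - 1) (m i)))) := by
    filter_upwards [hev1] with i h1
    apply Finset.sum_nonneg
    intro k hk
    have hkm : k ≤ m i := by
      have := Finset.mem_range.mp hk; omega
    have hbase : 0 ≤ ((1 - (k : ℝ) * a * Real.log (p i) / (n i)) ^ (n i))⁻¹ := by
      rcases Nat.eq_zero_or_pos (n i) with hn | hn
      · rw [hn]; norm_num
      · have hnR : (0:ℝ) < n i := by exact_mod_cast hn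
        have hL0 : 0 ≤ Real.log (p i) := Real.log_nonneg (by exact_mod_cast h1)
        have hkM : (k:ℝ) ≤ m i := by exact_mod_cast hkm
        have hx : (k : ℝ) * a * Real.log (p i) / (n i) ≤ 1/2 := by
          have h1' : (k : ℝ) * a * Real.log (p i) / (n i)
              ≤ (m i : ℝ) * a * Real.log (p i) / (n i) := by
            gcongr
          have h2' : (m i:ℝ)*a*Real.log (p i)/(n i)
              = a * ((m i:ℝ)*Real.log (p i)/(n i)) := by ring
          nlinarith [mul_le_mul_of_nonneg_left (hmn i) ha0.le]
        have hb : (0:ℝ) ≤ 1 - (k : ℝ) * a * Real.log (p i) / (n i) := by linarith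
        exact inv_nonneg.mpr (pow_nonneg hb _)
    have hw : (0:ℝ) ≤ (Nat.choose (m i) k : ℝ) * (Nat.choose (p i - m i - 1) (m i - k)) /
              (Nat.choose (p i - 1) (m i)) := by positivity
    exact mul_nonneg hbase hw
  calc Filter.limsup (fun i =>
        ∑ k ∈ Finset.range (m i + 1),
          ((1 - (k : ℝ) * a * Real.log (p i) / (n i)) ^ (n i))⁻¹ *
            ((Nat.choose (m i) k : ℝ) * (Nat.choose (p i - m i - 1) (m i - k)) /
              (Nat.choose (p i - 1) (m i)))) atTop
      ≤ Filter.limsup (fun i => 1 + 4*(p i:ℝ)^(2*a+2*c-1)) atTop :=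
        limsup_le_limsup hFg (isCoboundedUnder_le_of_eventually_le atTop hlb)
          hg.isBoundedUnder_le
    _ = 1 := hg.limsup_eq
end

section
/- Let Q₁, Q₂ be (p+1)×(p+1) matrices such that Qⱼ Qⱼᵀ − I_{p+1} has the symmetric arrowhead form [[0, a₂ δⱼ, a₁ δⱼ], [a₂ δⱼᵀ, 0, 0], [a₁ δⱼᵀ, 0, 0]] for j = 1,2, where δ₁, δ₂ ∈ ℝ^{p−1} and a₁, a₂ ∈ ℝ. Then det(I_{p+1} − (Q₁Q₁ᵀ − I_{p+1})(Q₂Q₂ᵀ − I_{p+1})) = (1 − (a₁² + a₂²) δ₁ᵀδ₂)². -/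
open Matrix

/-- if `Qⱼ Qⱼᵀ − I` has the symmetric arrowhead form with zero
diagonal blocks and off-diagonal columns `a₂ δⱼ` and `a₁ δⱼ`, then
`det(I − (Q₁Q₁ᵀ − I)(Q₂Q₂ᵀ − I)) = (1 − (a₁² + a₂²) δ₁ᵀδ₂)²`. -/
theorem stmt8 (m : ℕ) (a₁ a₂ : ℝ) (δ₁ δ₂ : Fin m → ℝ)
    (Q₁ Q₂ : Matrix (Fin m ⊕ Fin 2) (Fin m ⊕ Fin 2) ℝ)
    (h₁ : Q₁ * Q₁ᵀ - 1 =
      Matrix.fromBlocks 0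
        (Matrix.of fun (i : Fin m) (c : Fin 2) => (if c = 0 then a₂ else a₁) * δ₁ i)
        (Matrix.of fun (c : Fin 2) (i : Fin m) => (if c = 0 then a₂ else a₁) * δ₁ i)
        0)
    (h₂ : Q₂ * Q₂ᵀ - 1 =
      Matrix.fromBlocks 0
        (Matrix.of fun (i : Fin m) (c : Fin 2) => (if c = 0 then a₂ else a₁) * δ₂ i)
        (Matrix.of fun (c : Fin 2) (i : Fin m) => (if c = 0 then a₂ else a₁) * δ₂ i)
        0) :
    (1 - (Q₁ * Q₁ᵀ - 1) * (Q₂ * Q₂ᵀ - 1)).det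
      = (1 - (a₁ ^ 2 + a₂ ^ 2) * (δ₁ ⬝ᵥ δ₂)) ^ 2 := by
  rw [h₁, h₂]
  set B₁ := Matrix.of fun (i : Fin m) (c : Fin 2) => (if c = 0 then a₂ else a₁) * δ₁ i
  set C₁ := Matrix.of fun (c : Fin 2) (i : Fin m) => (if c = 0 then a₂ else a₁) * δ₁ i
  set B₂ := Matrix.of fun (i : Fin m) (c : Fin 2) => (if c = 0 then a₂ else a₁) * δ₂ i
  set C₂ := Matrix.of fun (c : Fin 2) (i : Fin m) => (if c = 0 then a₂ else a₁) * δ₂ i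
  have key : (1 : Matrix (Fin m ⊕ Fin 2) (Fin m ⊕ Fin 2) ℝ)
      - fromBlocks 0 B₁ C₁ 0 * fromBlocks 0 B₂ C₂ 0
      = fromBlocks (1 - B₁ * C₂) 0 0 (1 - C₁ * B₂) := by
    rw [fromBlocks_multiply, ← fromBlocks_one, sub_eq_add_neg, fromBlocks_neg,
      fromBlocks_add]
    congr 1 <;> simp [sub_eq_add_neg]
  rw [key, det_fromBlocks_zero₁₂]
  have hB : (1 : Matrix (Fin m) (Fin m) ℝ) - B₁ * C₂
      = 1 + replicateCol (Fin 1) (fun i => -((a₁ ^ 2 + a₂ ^ 2) * δ₁ i)) * replicateRow (Fin 1) δ₂ := by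
    ext i j
    simp [B₁, C₂, Matrix.mul_apply, Fin.sum_univ_two, Matrix.replicateCol_apply, Matrix.replicateRow_apply,
      Matrix.one_apply, sub_eq_add_neg]
    ring
  have h1 : (1 - B₁ * C₂).det = 1 - (a₁ ^ 2 + a₂ ^ 2) * (δ₁ ⬝ᵥ δ₂) := by
    erw [hB, det_one_add_replicateCol_mul_replicateRow]
    simp [dotProduct, Finset.mul_sum, sub_eq_add_neg]
    exact Finset.sum_congr rfl fun i _ => by ring
  have hs : ∀ a b : ℝ, (∑ x, a * δ₁ x * (b * δ₂ x)) = a * b * (δ₁ ⬝ᵥ δ₂) := by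
    intro a b
    simp only [dotProduct, Finset.mul_sum]
    exact Finset.sum_congr rfl fun i _ => by ring
  have h2 : (1 - C₁ * B₂).det = 1 - (a₁ ^ 2 + a₂ ^ 2) * (δ₁ ⬝ᵥ δ₂) := by
    rw [det_fin_two]
    simp only [C₁, B₂, Matrix.sub_apply, Matrix.mul_apply, Matrix.one_apply, Matrix.of_apply]
    norm_num
    rw [hs, hs, hs, hs]
    ring
  rw [h1, h2]
  ring
end

section
/- Suppose there exist constants c₁, c₂ > 0, a sequence h_n > 0, and a confidence interval CI* ∈ C_α(Θ) such that (1) for every τ ∈ ℝ, every test ψ with sup_{θ: g(θ)=τ} E_θ ψ ≤ α satisfies sup_{θ: g(θ)=τ+c₁h_n} E_θ ψ ≤ 2α, and (2) sup_{θ∈Θ} E_θ diam(CI*) ≤ c₂ h_n. Then for α ∈ (0, 1/3): inf_{CI∈C_α(Θ)} inf_{θ∈Θ} E_θ diam(CI) ≥ (1−3α) c₁ h_n. -/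
open MeasureTheory
open scoped ENNReal

variable {D Θ' : Type*} [MeasurableSpace D]

/-- Coverage of a confidence interval `[l, u]` for `g(θ)` uniformly over `Θ₁`. -/
def covers (P : Θ' → Measure D) (g : Θ' → ℝ) (α : ℝ) (Θ₁ : Set Θ')
    (l u : D → ℝ) : Prop :=
  ∀ θ ∈ Θ₁, ENNReal.ofReal (1 - α) ≤ P θ {x | l x ≤ g θ ∧ g θ ≤ u x}

/-- `CI = [l,u]` is a valid (measurable) `1−α` confidence interval over `Θ₁`. -/
def isCI (P : Θ' → Measure D) (g : Θ' → ℝ) (α : ℝ) (Θ₁ : Set Θ')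
    (l u : D → ℝ) : Prop :=
  Measurable l ∧ Measurable u ∧ covers P g α Θ₁ l u

/-- Expected length of the interval `[l, u]` under `P θ`. -/
noncomputable def elen (P : Θ' → Measure D) (θ : Θ') (l u : D → ℝ) : ℝ≥0∞ :=
  ∫⁻ x, ENNReal.ofReal (u x - l x) ∂(P θ)

/-- `L(Θ₁, Θ₀)`: minimax expected length over `Θ₁` of confidence intervals
valid over `Θ₀`. -/
noncomputable def minimaxLen (P : Θ' → Measure D) (g : Θ' → ℝ) (α : ℝ)
    (Θ₁ Θ₀ : Set Θ') : ℝ≥0∞ :=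
  ⨅ (lu : (D → ℝ) × (D → ℝ)) (_ : isCI P g α Θ₀ lu.1 lu.2),
    ⨆ θ ∈ Θ₁, elen P θ lu.1 lu.2


/-- if (1) every level-`α` test of `{g(θ)=τ}` has power at most
`2α` on `{g(θ)=τ+c₁h}` for every `τ`, and (2) there is a valid confidence
interval `CI* ∈ C_α(Θ)` with `sup_{θ∈Θ} E_θ diam(CI*) ≤ c₂ h`, then for
`α ∈ (0,1/3)`, `inf_{CI∈C_α(Θ)} inf_{θ∈Θ} E_θ diam(CI) ≥ (1−3α) c₁ h`. -/
theorem stmt11 (P : Θ' → Measure D) [∀ θ, IsProbabilityMeasure (P θ)]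
    (g : Θ' → ℝ) (Θ : Set Θ') (α c₁ c₂ h : ℝ)
    (hα0 : 0 < α) (hα1 : α < 1/3) (hc₁ : 0 < c₁) (hc₂ : 0 < c₂) (hh : 0 < h)
    (lstar ustar : D → ℝ) (hCI : isCI P g α Θ lstar ustar)
    (hlen : (⨆ θ ∈ Θ, elen P θ lstar ustar) ≤ ENNReal.ofReal (c₂ * h))
    (htest : ∀ τ : ℝ, ∀ ψ : D → ℝ, Measurable ψ → (∀ x, 0 ≤ ψ x ∧ ψ x ≤ 1) →
      (∀ θ ∈ Θ, g θ = τ → ∫ x, ψ x ∂(P θ) ≤ α) →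
      ∀ θ ∈ Θ, g θ = τ + c₁ * h → ∫ x, ψ x ∂(P θ) ≤ 2 * α) :
    ENNReal.ofReal ((1 - 3 * α) * c₁ * h) ≤
      ⨅ (lu : (D → ℝ) × (D → ℝ)) (_ : isCI P g α Θ lu.1 lu.2),
        ⨅ θ ∈ Θ, elen P θ lu.1 lu.2 := by
  refine le_iInf fun lu => le_iInf fun hlu => le_iInf fun θ => le_iInf fun hθ => ?_
  obtain ⟨hl, hu, hcov⟩ := hlu
  set τ : ℝ := g θ - c₁ * h with hτ
  -- generic complement bound from coverage
  have compl_bound : ∀ (θ' : Θ') (s : Set D), MeasurableSet s →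
      ENNReal.ofReal (1 - α) ≤ P θ' s → P θ' sᶜ ≤ ENNReal.ofReal α := by
    intro θ' s hs hcs
    rw [measure_compl hs (measure_ne_top _ _), measure_univ]
    refine tsub_le_iff_right.mpr ?_
    calc (1 : ℝ≥0∞) = ENNReal.ofReal (α + (1 - α)) := by norm_num
      _ = ENNReal.ofReal α + ENNReal.ofReal (1 - α) :=
          ENNReal.ofReal_add hα0.le (by linarith)
      _ ≤ ENNReal.ofReal α + P θ' s := add_le_add le_rfl hcs
  set S : Set D := {x | lu.1 x ≤ τ ∧ τ ≤ lu.2 x} with hSdef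
  have hS : MeasurableSet S :=
    (measurableSet_le hl measurable_const).inter (measurableSet_le measurable_const hu)
  set ψ : D → ℝ := Sᶜ.indicator fun _ => (1:ℝ) with hψ
  have hψm : Measurable ψ := measurable_const.indicator hS.compl
  have hψ01 : ∀ x, 0 ≤ ψ x ∧ ψ x ≤ 1 := by
    intro x
    refine ⟨Set.indicator_nonneg (fun _ _ => zero_le_one) x, ?_⟩
    classical
    by_cases hx : x ∈ Sᶜ <;> simp [hψ, hx]
  have hint : ∀ θ', ∫ x, ψ x ∂(P θ') = (P θ' Sᶜ).toReal := by
    intro θ'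
    simp [hψ, integral_indicator_const (1:ℝ) hS.compl]
    rfl
  have hlevel : ∀ θ' ∈ Θ, g θ' = τ → ∫ x, ψ x ∂(P θ') ≤ α := by
    intro θ' hθ' hg
    rw [hint]
    have hcov' := hcov θ' hθ'
    rw [hg] at hcov'
    exact ENNReal.toReal_le_of_le_ofReal hα0.le (compl_bound θ' S hS hcov')
  have hpow := htest τ ψ hψm hψ01 hlevel θ hθ (by rw [hτ]; ring)
  rw [hint] at hpow
  have hSc : P θ Sᶜ ≤ ENNReal.ofReal (2 * α) :=
    (ENNReal.le_ofReal_iff_toReal_le (measure_ne_top _ _) (by linarith)).mpr hpow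
  set T : Set D := {x | lu.1 x ≤ g θ ∧ g θ ≤ lu.2 x} with hTdef
  have hT : MeasurableSet T :=
    (measurableSet_le hl measurable_const).inter (measurableSet_le measurable_const hu)
  have hTc : P θ Tᶜ ≤ ENNReal.ofReal α := compl_bound θ T hT (hcov θ hθ)
  have hA : ENNReal.ofReal (1 - 3 * α) ≤ P θ (S ∩ T) := by
    have h1 : P θ (S ∩ T)ᶜ ≤ ENNReal.ofReal (3 * α) := by
      rw [Set.compl_inter]
      calc P θ (Sᶜ ∪ Tᶜ) ≤ P θ Sᶜ + P θ Tᶜ := measure_union_le _ _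
        _ ≤ ENNReal.ofReal (2 * α) + ENNReal.ofReal α := add_le_add hSc hTc
        _ = ENNReal.ofReal (3 * α) := by
            rw [← ENNReal.ofReal_add (by linarith) hα0.le]; ring_nf
    have h2 : (1 : ℝ≥0∞) ≤ P θ (S ∩ T) + ENNReal.ofReal (3 * α) := by
      calc (1 : ℝ≥0∞) = P θ (S ∩ T) + P θ (S ∩ T)ᶜ := by
            rw [measure_add_measure_compl (hS.inter hT), measure_univ]
        _ ≤ _ := add_le_add le_rfl h1
    have h3 : ENNReal.ofReal (1 - 3 * α) + ENNReal.ofReal (3 * α) ≤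
        P θ (S ∩ T) + ENNReal.ofReal (3 * α) := by
      rw [← ENNReal.ofReal_add (by linarith) (by linarith)]
      simpa using h2
    exact (ENNReal.add_le_add_iff_right ENNReal.ofReal_ne_top).mp h3
  calc ENNReal.ofReal ((1 - 3 * α) * c₁ * h)
      = ENNReal.ofReal (c₁ * h) * ENNReal.ofReal (1 - 3 * α) := by
        rw [← ENNReal.ofReal_mul (by positivity)]; ring_nf
    _ ≤ ENNReal.ofReal (c₁ * h) * P θ (S ∩ T) := mul_le_mul_right hA _
    _ = ∫⁻ _ in S ∩ T, ENNReal.ofReal (c₁ * h) ∂(P θ) := by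
        rw [setLIntegral_const, mul_comm]
    _ ≤ ∫⁻ x in S ∩ T, ENNReal.ofReal (lu.2 x - lu.1 x) ∂(P θ) := by
        refine setLIntegral_mono' (hS.inter hT) fun x hx => ?_
        have h1 := hx.1.1
        have h2 := hx.2.2
        exact ENNReal.ofReal_le_ofReal (by rw [hτ] at h1; linarith)
    _ ≤ elen P θ lu.1 lu.2 := setLIntegral_le_lintegral _ _
end
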